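/- Let T > 0, let f : ℝ × ℝ^n × ℝ^m → ℝ^n be continuous, and let c_1, …, c_K ∈ ℝ^m be fixed vectors. Let x : [0,T] → ℝ^n be continuous and suppose there is a measurable control u : [0,T] → ℝ^m such that x(t) = x(a) + ∫_a^t f(s, x(s), u(s)) ds for all a ≤ t in [0,T]. Then for every ε > 0 there exists δ > 0 such that for every a ∈ [0,T], every Δ ∈ (0, δ] with a + Δ ≤ T, and every chattering measure α such that u restricted to [a, a+Δ] takes the value c_k on a measurable set A_k with μ(A_k) = α_k Δ, where A_1, …, A_K partition [a, a+Δ], one has ‖x(a+Δ) − x(a) − Δ · Σ_{k=1}^K α_k f(a, x(a), c_k)‖ ≤ ε Δ. -/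

import Mathlib

open MeasureTheory Set

/-- Chattering Euler propagation: if `x` solves the controlled integral
equation with dynamics `f` and a measurable control `u`, then for every
`ε > 0` there is `δ > 0` such that on every subinterval `[a, a+Δ] ⊆ [0,T]`
with `0 < Δ ≤ δ` on which `u` is a chattering control with levels `c k` and
measure `α`, one has
`‖x(a+Δ) − x(a) − Δ • ∑ k, α k • f(a, x(a), c k)‖ ≤ ε·Δ`. -/
theorem chattering_euler_propagation
    (n m K : ℕ) (T : ℝ) (hT : 0 < T)
    (f : ℝ × EuclideanSpace ℝ (Fin n) × EuclideanSpace ℝ (Fin m) →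
          EuclideanSpace ℝ (Fin n))
    (hf : Continuous f)
    (c : Fin K → EuclideanSpace ℝ (Fin m))
    (x : ℝ → EuclideanSpace ℝ (Fin n)) (hx : ContinuousOn x (Icc 0 T))
    (u : ℝ → EuclideanSpace ℝ (Fin m)) (hu : Measurable u)
    (hxeq : ∀ a ∈ Icc (0 : ℝ) T, ∀ t ∈ Icc (0 : ℝ) T, a ≤ t →
      x t = x a + ∫ s in a..t, f (s, x s, u s)) :
    ∀ ε > (0 : ℝ), ∃ δ > (0 : ℝ),
      ∀ a ∈ Icc (0 : ℝ) T, ∀ Δ : ℝ, 0 < Δ → Δ ≤ δ → a + Δ ≤ T →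
      ∀ α : Fin K → ℝ, (∀ k, 0 ≤ α k) → (∑ k, α k = 1) →
      ∀ A : Fin K → Set ℝ,
        (∀ k, MeasurableSet (A k)) →
        (∀ i j, i ≠ j → Disjoint (A i) (A j)) →
        (∀ k, A k ⊆ Icc a (a + Δ)) →
        (Icc a (a + Δ) ⊆ ⋃ k, A k) →
        (∀ k, volume (A k) = ENNReal.ofReal (α k * Δ)) →
        (∀ k, ∀ t ∈ A k, u t = c k) →
        ‖x (a + Δ) - x a - Δ • ∑ k, α k • f (a, x a, c k)‖ ≤ ε * Δ := by
  intro ε hε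
  -- compact set on which `f` is uniformly continuous
  set S : Set (ℝ × EuclideanSpace ℝ (Fin n) × EuclideanSpace ℝ (Fin m)) :=
    Icc 0 T ×ˢ ((x '' Icc 0 T) ×ˢ Set.range c) with hS
  have hScomp : IsCompact S :=
    isCompact_Icc.prod ((isCompact_Icc.image_of_continuousOn hx).prod
      (Set.finite_range c).isCompact)
  have hfu : UniformContinuousOn f S :=
    hScomp.uniformContinuousOn_of_continuous hf.continuousOn
  obtain ⟨η, hη, hfη⟩ := Metric.uniformContinuousOn_iff.mp hfu ε hε
  -- uniform continuity of x
  have hxu : UniformContinuousOn x (Icc 0 T) :=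
    isCompact_Icc.uniformContinuousOn_of_continuous hx
  obtain ⟨δ₁, hδ₁, hxδ⟩ := Metric.uniformContinuousOn_iff.mp hxu (η / 2) (by positivity)
  refine ⟨min (δ₁ / 2) (η / 2), by positivity, ?_⟩
  intro a ha Δ hΔ hΔδ haΔ α hα hαsum A hA hdisj hAsub hcover hvol huc
  have haΔ' : a + Δ ∈ Icc (0 : ℝ) T := ⟨by linarith [ha.1], haΔ⟩
  have hIcc : Icc a (a + Δ) ⊆ Icc (0 : ℝ) T := fun s hs => ⟨le_trans ha.1 hs.1, le_trans hs.2 haΔ⟩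
  set v : Fin K → EuclideanSpace ℝ (Fin n) := fun k => f (a, x a, c k) with hv
  set F : ℝ → EuclideanSpace ℝ (Fin n) := fun s => f (s, x s, u s) with hF
  set Fk : Fin K → ℝ → EuclideanSpace ℝ (Fin n) := fun k s => f (s, x s, c k) with hFk
  -- uniqueness of covering index
  have hunique : ∀ s ∈ Icc a (a + Δ), ∃ k, s ∈ A k ∧ ∀ j, j ≠ k → s ∉ A j := by
    intro s hs
    obtain ⟨k, hk⟩ := Set.mem_iUnion.mp (hcover hs)
    exact ⟨k, hk, fun j hj hsj => (hdisj j k hj).le_bot ⟨hsj, hk⟩⟩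
  -- pointwise bound on each piece
  have hbound : ∀ k, ∀ s ∈ Icc a (a + Δ), ‖Fk k s - v k‖ ≤ ε := by
    intro k s hs
    have hsT : s ∈ Icc (0 : ℝ) T := hIcc hs
    have hsa : |s - a| ≤ Δ := by
      rw [abs_of_nonneg (by linarith [hs.1])]; linarith [hs.2]
    have hsδ : dist s a < δ₁ := by
      rw [Real.dist_eq]
      calc |s - a| ≤ Δ := hsa
        _ ≤ min (δ₁ / 2) (η / 2) := hΔδ
        _ < δ₁ := lt_of_le_of_lt (min_le_left _ _) (by linarith)
    have hxd : dist (x s) (x a) < η / 2 := hxδ s hsT a ha hsδ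
    have hmemS : (s, x s, c k) ∈ S := ⟨hsT, ⟨s, hsT, rfl⟩, ⟨k, rfl⟩⟩
    have hmemS' : (a, x a, c k) ∈ S := ⟨ha, ⟨a, ha, rfl⟩, ⟨k, rfl⟩⟩
    have hdist : dist ((s, x s, c k) : ℝ × EuclideanSpace ℝ (Fin n) × EuclideanSpace ℝ (Fin m))
        (a, x a, c k) < η := by
      rw [Prod.dist_eq, Prod.dist_eq]
      have h1 : dist s a < η := by
        rw [Real.dist_eq]
        calc |s - a| ≤ Δ := hsa
          _ ≤ min (δ₁ / 2) (η / 2) := hΔδ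
          _ < η := lt_of_le_of_lt (min_le_right _ _) (by linarith)
      simp only [dist_self]
      exact max_lt h1 (max_lt (by linarith) hη)
    have := hfη _ hmemS _ hmemS' hdist
    rw [dist_eq_norm] at this
    exact le_of_lt this
  -- integrability facts
  have hvolIcc : volume (Icc a (a + Δ)) < ⊤ := by
    rw [Real.volume_Icc]; exact ENNReal.ofReal_lt_top
  have hFkc : ∀ k, ContinuousOn (Fk k) (Icc a (a + Δ)) := by
    intro k
    exact hf.comp_continuousOn
      ((continuousOn_id.prodMk ((hx.mono hIcc).prodMk continuousOn_const)))
  have hFki : ∀ k, IntegrableOn (Fk k) (Icc a (a + Δ)) volume :=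
    fun k => (hFkc k).integrableOn_Icc
  have hDi : ∀ k, IntegrableOn ((A k).indicator (fun s => Fk k s - v k)) (Icc a (a + Δ)) volume :=
    fun k => (((hFki k).sub (integrableOn_const hvolIcc.ne))).indicator (hA k)
  have hGi : ∀ k, IntegrableOn ((A k).indicator (fun _ => v k)) (Icc a (a + Δ)) volume :=
    fun k => (integrableOn_const hvolIcc.ne).indicator (hA k)
  set D : ℝ → EuclideanSpace ℝ (Fin n) :=
    fun s => ∑ k, (A k).indicator (fun t => Fk k t - v k) s with hD
  set G : ℝ → EuclideanSpace ℝ (Fin n) :=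
    fun s => ∑ k, (A k).indicator (fun _ => v k) s with hG
  have hDint : IntegrableOn D (Icc a (a + Δ)) volume := integrable_finset_sum _ (fun k _ => hDi k)
  have hGint : IntegrableOn G (Icc a (a + Δ)) volume := integrable_finset_sum _ (fun k _ => hGi k)
  -- pointwise decomposition F = D + G on Icc
  have hFDG : ∀ s ∈ Icc a (a + Δ), F s = D s + G s := by
    intro s hs
    obtain ⟨k, hk, hne⟩ := hunique s hs
    have hDs : D s = Fk k s - v k := by
      simp only [hD]
      rw [Finset.sum_eq_single_of_mem k (Finset.mem_univ k)]
      · exact Set.indicator_of_mem hk _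
      · intro j _ hj
        exact Set.indicator_of_notMem (hne j hj) _
    have hGs : G s = v k := by
      simp only [hG]
      rw [Finset.sum_eq_single_of_mem k (Finset.mem_univ k)]
      · exact Set.indicator_of_mem hk _
      · intro j _ hj
        exact Set.indicator_of_notMem (hne j hj) _
    rw [hDs, hGs, hF, hFk]
    simp [huc k s hk]
  -- main integral identity
  have hxint : x (a + Δ) - x a = ∫ s in Icc a (a + Δ), F s := by
    have := hxeq a (hIcc (Set.left_mem_Icc.mpr (by linarith))) (a + Δ) haΔ' (by linarith)
    rw [this]
    rw [intervalIntegral.integral_of_le (by linarith), ← integral_Icc_eq_integral_Ioc]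
    abel
  have hintF : ∫ s in Icc a (a + Δ), F s = (∫ s in Icc a (a + Δ), D s) + ∫ s in Icc a (a + Δ), G s := by
    rw [← integral_add hDint hGint]
    exact setIntegral_congr_fun measurableSet_Icc (fun s hs => hFDG s hs)
  -- compute ∫ G
  have hGval : ∫ s in Icc a (a + Δ), G s = Δ • ∑ k, α k • v k := by
    simp only [hG]
    rw [integral_finset_sum _ (fun k _ => hGi k)]
    have : ∀ k, ∫ s in Icc a (a + Δ), (A k).indicator (fun _ => v k) s = (α k * Δ) • v k := by
      intro k
      rw [setIntegral_indicator (hA k), Set.inter_eq_right.mpr (hAsub k), setIntegral_const,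
        measureReal_def, hvol k, ENNReal.toReal_ofReal (mul_nonneg (hα k) hΔ.le)]
    rw [Finset.sum_congr rfl (fun k _ => this k)]
    rw [Finset.smul_sum]
    congr 1
    ext k
    rw [mul_comm, mul_smul]
  -- bound ∫ D
  have hDbound : ‖∫ s in Icc a (a + Δ), D s‖ ≤ ε * Δ := by
    have h1 : ∀ s ∈ Icc a (a + Δ), ‖D s‖ ≤ ε := by
      intro s hs
      obtain ⟨k, hk, hne⟩ := hunique s hs
      have hDs : D s = Fk k s - v k := by
        simp only [hD]
        rw [Finset.sum_eq_single_of_mem k (Finset.mem_univ k)]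
        · exact Set.indicator_of_mem hk _
        · intro j _ hj
          exact Set.indicator_of_notMem (hne j hj) _
      rw [hDs]
      exact hbound k s hs
    calc ‖∫ s in Icc a (a + Δ), D s‖
        ≤ ε * (volume (Icc a (a + Δ))).toReal :=
          norm_setIntegral_le_of_norm_le_const_ae' hvolIcc
            (Filter.Eventually.of_forall h1)
      _ = ε * Δ := by
          rw [Real.volume_Icc, ENNReal.toReal_ofReal (by linarith)]
          ring_nf
  -- conclusion
  have : x (a + Δ) - x a - Δ • ∑ k, α k • v k = ∫ s in Icc a (a + Δ), D s := by
    rw [hxint, hintF, hGval]; abel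
  rw [hv] at this
  rw [this]
  exact hDbound
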